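/- Let A = (Q, δ, q₀, F) be a one-letter alphabet alternating finite automaton, and let Δ be the pOCA constructed from A as described. Then: (1) for every q ∈ Q and every n ∈ ℕ, qXⁿZ ∼ q'XⁿZ in S(Δ) if and only if ¬Acc(q, n); and (2) pXZ ∼ p'XZ in S(Δ) if and only if the set {n ∈ ℕ | Acc(q₀, n)} is empty. -/

import Mathlib

open scoped ENNReal

noncomputable section

/-- A probabilistic labelled transition system (pLTS): states `S`, alphabet `A`,
and a transition relation into probability distributions (`PMF`s) on `S`. -/
structure PLTS (S : Type) (A : Type) where
  Tr : S → A → PMF S → Prop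

namespace PLTS

variable {S A : Type}

/-- The mass that a distribution assigns to a set of states. -/
def mass (d : PMF S) (E : Set S) : ℝ≥0∞ := ∑' s : E, d s

/-- Two distributions are `r`-equivalent if they assign equal mass to every
`r`-equivalence class (for an equivalence `r`, the classes are the sets `{t | r s t}`). -/
def REquiv (r : S → S → Prop) (d d' : PMF S) : Prop :=
  ∀ s : S, mass d {t | r s t} = mass d' {t | r s t}

/-- An equivalence relation is a bisimulation if related states can match
each other's transitions with `r`-equivalent target distributions. -/
def IsBisimulation (L : PLTS S A) (r : S → S → Prop) : Prop :=
  Equivalence r ∧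
    ∀ s t, r s t → ∀ a d, L.Tr s a d → ∃ d', L.Tr t a d' ∧ REquiv r d d'

/-- Bisimilarity: the union of all bisimulation relations. -/
def Bisim (L : PLTS S A) (s t : S) : Prop :=
  ∃ r, L.IsBisimulation r ∧ r s t

/-- The bisimulation approximants `∼ₙ`. -/
def approx (L : PLTS S A) : ℕ → S → S → Prop
  | 0 => fun _ _ => True
  | n + 1 => fun s t =>
      (∀ a d, L.Tr s a d → ∃ d', L.Tr t a d' ∧ REquiv (L.approx n) d d') ∧
      (∀ a d', L.Tr t a d' → ∃ d, L.Tr s a d ∧ REquiv (L.approx n) d d')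

/-- A pLTS is finitely branching if every state has finitely many transitions. -/
def FinBranching (L : PLTS S A) : Prop :=
  ∀ s, {p : A × PMF S | L.Tr s p.1 p.2}.Finite

/-- One-step successor relation: `s → s'` iff some transition of `s` gives `s'`
positive probability. -/
def Step (L : PLTS S A) (s s' : S) : Prop :=
  ∃ a d, L.Tr s a d ∧ d s' ≠ 0

end PLTS

/-- The rules of a probabilistic pushdown automaton (pPDA) with control states
`Q`, stack alphabet `Γ`, input alphabet `A`: a rule `qX –a↪ d` is a tuple
`(q, X, a, d)` where `d` is a distribution over pairs of a control state and
a string of length at most two that replaces the top symbol. -/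
def PPDARules (Q Γ A : Type) := Q → Γ → A → PMF (Q × List Γ) → Prop

/-- Well-formedness of pPDA rules: target distributions are supported on
configurations `(p, α)` with `|α| ≤ 2` (i.e. `α ∈ Γ^{≤2}`). -/
def PPDAWf {Q Γ A : Type} (Δ : PPDARules Q Γ A) : Prop :=
  ∀ q X a d, Δ q X a d → ∀ p (α : List Γ), d (p, α) ≠ 0 → α.length ≤ 2

/-- A nondeterministic PDA is a pPDA all of whose rules use Dirac distributions. -/
def IsPDA {Q Γ A : Type} (Δ : PPDARules Q Γ A) : Prop :=
  ∀ q X a d, Δ q X a d → ∃ c, d = PMF.pure c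

/-- The pLTS induced by a pPDA on configurations `Q × Γ*`: a rule `qX –a↪ d`
and a tail `β ∈ Γ*` induce the transition `qXβ –a→ d'` with `d'(pαβ) = d(pα)`;
configurations with empty stack have no transitions. -/
def PPDARules.plts {Q Γ A : Type} (Δ : PPDARules Q Γ A) : PLTS (Q × List Γ) A where
  Tr := fun c a d' => ∃ (q : Q) (X : Γ) (β : List Γ) (d : PMF (Q × List Γ)),
    c = (q, X :: β) ∧ Δ q X a d ∧ d' = d.map (fun pα => (pα.1, pα.2 ++ β))

/-- The stack alphabet `{X, Z}` of a one-counter automaton. -/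
inductive OCSym : Type
  | X : OCSym
  | Z : OCSym
deriving DecidableEq

/-- Well-formedness of pOCA rules: `Z` always and only occurs at the bottom of
the stack, i.e. rules for top `X` rewrite `X` into `ε`, `X` or `XX`, and rules
for top `Z` rewrite `Z` into `Z` or `XZ`. -/
def POCAWf {Q A : Type} (Δ : PPDARules Q OCSym A) : Prop :=
  (∀ q a d, Δ q OCSym.X a d → ∀ p (α : List OCSym), d (p, α) ≠ 0 →
      α = [] ∨ α = [OCSym.X] ∨ α = [OCSym.X, OCSym.X]) ∧
  (∀ q a d, Δ q OCSym.Z a d → ∀ p (α : List OCSym), d (p, α) ≠ 0 →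
      α = [OCSym.Z] ∨ α = [OCSym.X, OCSym.Z])

/-- The configuration `pXᵐZ` of a pOCA. -/
def oconf {Q : Type} (p : Q) (m : ℕ) : Q × List OCSym :=
  (p, List.replicate m OCSym.X ++ [OCSym.Z])

/-- The finite pLTS `ℱ_Δ` underlying a pOCA: `p –a→ d'` iff there is a rule
`pX –a↪ d` with `d'(q) = d(q,ε) + d(q,X) + d(q,XX)` for all `q`. -/
def underlying {Q A : Type} (Δ : PPDARules Q OCSym A) : PLTS Q A where
  Tr := fun p a d' => ∃ d, Δ p OCSym.X a d ∧
    ∀ q : Q, d' q = d (q, []) + d (q, [OCSym.X]) + d (q, [OCSym.X, OCSym.X])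

/-- The disjoint-union pLTS of two pLTSs over the same alphabet. -/
def PLTS.sum {S₁ S₂ A : Type} (L₁ : PLTS S₁ A) (L₂ : PLTS S₂ A) :
    PLTS (S₁ ⊕ S₂) A where
  Tr := fun s a d =>
    (∃ s₁ d₁, s = Sum.inl s₁ ∧ L₁.Tr s₁ a d₁ ∧ d = d₁.map Sum.inl) ∨
    (∃ s₂ d₂, s = Sum.inr s₂ ∧ L₂.Tr s₂ a d₂ ∧ d = d₂.map Sum.inr)

/-- `INC`: configurations `pXᵐZ` that are not related by the `k`-th
approximant (`k = |Q|`) to any state `q` of the underlying finite pLTS, in the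
disjoint union of `S(Δ)` and `ℱ_Δ`. -/
def InINC {Q A : Type} [Fintype Q] (Δ : PPDARules Q OCSym A)
    (p : Q) (m : ℕ) : Prop :=
  ∀ q : Q, ¬ (Δ.plts.sum (underlying Δ)).approx (Fintype.card Q)
      (Sum.inl (oconf p m)) (Sum.inr q)

/-- `ℓ` one-step successor moves lead from `s` to `t`. -/
def PLTS.StepN {S A : Type} (L : PLTS S A) : ℕ → S → S → Prop
  | 0, s, t => s = t
  | n + 1, s, t => ∃ u, L.Step s u ∧ L.StepN n u t

/-- `dist(c)`: the least number of one-step successor moves in `S(Δ)` leading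
from the configuration `c` to some configuration in `INC` (and `∞ = ⊤` if
`INC` is unreachable). -/
def distINC {Q A : Type} [Fintype Q] (Δ : PPDARules Q OCSym A)
    (c : Q × List OCSym) : ℕ∞ :=
  sInf {n : ℕ∞ | ∃ ℓ : ℕ, n = (ℓ : ℕ∞) ∧
    ∃ (p : Q) (m : ℕ), Δ.plts.StepN ℓ c (oconf p m) ∧ InINC Δ p m}

/-- The distribution giving each of `x`, `y` probability `1/2`. -/
def twoPoint {α : Type} (x y : α) : PMF α :=
  (PMF.bernoulli (1 / 2) (by norm_num)).map (fun b => if b then x else y)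

/-- The distribution giving `x` probability `0.4` and `y` probability `0.6`. -/
def wPoint {α : Type} (x y : α) : PMF α :=
  (PMF.bernoulli (2 / 5)
    (by first | (rw [div_le_one₀ (by norm_num)]; norm_num) | (rw [div_le_one (by norm_num)]; norm_num))).map
    (fun b => if b then x else y)

/-- The distribution giving each of `x`, `y`, `z` probability `1/3`. -/
def threePoint {α : Type} (x y z : α) : PMF α :=
  (PMF.uniformOfFintype (Fin 3)).map
    (fun i => if i = 0 then x else if i = 1 then y else z)

/-- Transition function entries of a one-letter alternating finite automaton:
`δ(q)` is either `q₁ ∧ q₂` or `q₁ ∨ q₂`. -/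
inductive Gate (Q : Type) : Type
  | and (q₁ q₂ : Q) : Gate Q
  | or (q₁ q₂ : Q) : Gate Q

/-- The acceptance predicate of a 1L-AFA: `Acc δ F n q` means the automaton
accepts the word of length `n` starting from `q`. -/
def AfaAcc {Q : Type} (δ : Q → Gate Q) (F : Set Q) : ℕ → Q → Prop
  | 0, q => q ∈ F
  | n + 1, q =>
    match δ q with
    | Gate.and q₁ q₂ => AfaAcc δ F n q₁ ∧ AfaAcc δ F n q₂
    | Gate.or q₁ q₂ => AfaAcc δ F n q₁ ∨ AfaAcc δ F n q₂

/-- The control states of the pOCA constructed from a 1L-AFA with state set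
`Q`: the states `p, p'`, the dead state `r`, the copies `q` (`base`) and `q'`
(`prim`) of each AFA state, and the auxiliary gadget states (per AFA state). -/
inductive CS (Q : Type) : Type
  | p : CS Q
  | p' : CS Q
  | r : CS Q
  | base (q : Q) : CS Q
  | prim (q : Q) : CS Q
  | r1 (q : Q) : CS Q
  | r2 (q : Q) : CS Q
  | r1' (q : Q) : CS Q
  | r2' (q : Q) : CS Q
  | s1 (q : Q) : CS Q
  | s2 (q : Q) : CS Q
  | u12 (q : Q) : CS Q
  | u12' (q : Q) : CS Q
  | u1'2 (q : Q) : CS Q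
  | u1'2' (q : Q) : CS Q

/-- The rules of the unary, fully probabilistic pOCA constructed from the
1L-AFA `(Q, δ, q₀, F)`. -/
inductive AfaRule {Q : Type} (δ : Q → Gate Q) (F : Set Q) (q₀ : Q) :
    CS Q → OCSym → Unit → PMF (CS Q × List OCSym) → Prop
  /- for `q ∈ F` the rule `qZ –1↪ rZ`; all other `Z`-rules are absent -/
  | acc (q : Q) (h : q ∈ F) :
      AfaRule δ F q₀ (CS.base q) OCSym.Z () (PMF.pure (CS.r, [OCSym.Z]))
  /- AND-gadget for `δ(q) = q₁ ∨ q₂` -/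
  | org₁ (q q₁ q₂ : Q) (h : δ q = Gate.or q₁ q₂) :
      AfaRule δ F q₀ (CS.base q) OCSym.X ()
        (twoPoint (CS.r1 q, [OCSym.X]) (CS.r2 q, [OCSym.X]))
  | org₂ (q q₁ q₂ : Q) (h : δ q = Gate.or q₁ q₂) :
      AfaRule δ F q₀ (CS.prim q) OCSym.X ()
        (twoPoint (CS.r1' q, [OCSym.X]) (CS.r2' q, [OCSym.X]))
  | org₃ (q q₁ q₂ : Q) (h : δ q = Gate.or q₁ q₂) :
      AfaRule δ F q₀ (CS.r1 q) OCSym.X ()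
        (twoPoint (CS.base q₁, []) (CS.s1 q, [OCSym.X]))
  | org₄ (q q₁ q₂ : Q) (h : δ q = Gate.or q₁ q₂) :
      AfaRule δ F q₀ (CS.r2 q) OCSym.X ()
        (twoPoint (CS.base q₂, []) (CS.s2 q, [OCSym.X]))
  | org₅ (q q₁ q₂ : Q) (h : δ q = Gate.or q₁ q₂) :
      AfaRule δ F q₀ (CS.r1' q) OCSym.X ()
        (twoPoint (CS.prim q₁, []) (CS.s1 q, [OCSym.X]))
  | org₆ (q q₁ q₂ : Q) (h : δ q = Gate.or q₁ q₂) :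
      AfaRule δ F q₀ (CS.r2' q) OCSym.X ()
        (twoPoint (CS.prim q₂, []) (CS.s2 q, [OCSym.X]))
  | sg₁ (q : Q) :
      AfaRule δ F q₀ (CS.s1 q) OCSym.X ()
        (twoPoint (CS.s1 q, [OCSym.X]) (CS.r, []))
  | sg₂ (q : Q) :
      AfaRule δ F q₀ (CS.s2 q) OCSym.X ()
        (wPoint (CS.s2 q, [OCSym.X]) (CS.r, []))
  /- OR-gadget for `δ(q) = q₁ ∧ q₂` -/
  | andg₁ (q q₁ q₂ : Q) (h : δ q = Gate.and q₁ q₂) :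
      AfaRule δ F q₀ (CS.base q) OCSym.X ()
        (twoPoint (CS.u12 q, [OCSym.X]) (CS.u1'2' q, [OCSym.X]))
  | andg₂ (q q₁ q₂ : Q) (h : δ q = Gate.and q₁ q₂) :
      AfaRule δ F q₀ (CS.prim q) OCSym.X ()
        (twoPoint (CS.u12' q, [OCSym.X]) (CS.u1'2 q, [OCSym.X]))
  | andg₃ (q q₁ q₂ : Q) (h : δ q = Gate.and q₁ q₂) :
      AfaRule δ F q₀ (CS.u12 q) OCSym.X ()
        (twoPoint (CS.base q₁, []) (CS.base q₂, []))
  | andg₄ (q q₁ q₂ : Q) (h : δ q = Gate.and q₁ q₂) :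
      AfaRule δ F q₀ (CS.u1'2' q) OCSym.X ()
        (twoPoint (CS.prim q₁, []) (CS.prim q₂, []))
  | andg₅ (q q₁ q₂ : Q) (h : δ q = Gate.and q₁ q₂) :
      AfaRule δ F q₀ (CS.u12' q) OCSym.X ()
        (twoPoint (CS.base q₁, []) (CS.prim q₂, []))
  | andg₆ (q q₁ q₂ : Q) (h : δ q = Gate.and q₁ q₂) :
      AfaRule δ F q₀ (CS.u1'2 q) OCSym.X ()
        (twoPoint (CS.prim q₁, []) (CS.base q₂, []))
  /- the initial rules for `p` and `p'` -/
  | pinit :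
      AfaRule δ F q₀ CS.p OCSym.X ()
        (threePoint (CS.p, [OCSym.X, OCSym.X]) (CS.base q₀, []) (CS.r, [OCSym.X]))
  | pinit' :
      AfaRule δ F q₀ CS.p' OCSym.X ()
        (threePoint (CS.p', [OCSym.X, OCSym.X]) (CS.prim q₀, []) (CS.r, [OCSym.X]))

/- ========================================================================
   Auxiliary development for the proof
   ======================================================================== -/

namespace AfaProof

open PLTS OCSym

/-! ### Mass computations -/

theorem mass_eq_outer {α : Type} (d : PMF α) (E : Set α) :
    PLTS.mass d E = d.toOuterMeasure E := by
  rw [PMF.toOuterMeasure_apply, PLTS.mass, tsum_subtype]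

theorem mass_map {α β : Type} (d : PMF α) (f : α → β) (E : Set β) :
    PLTS.mass (d.map f) E = PLTS.mass d (f ⁻¹' E) := by
  rw [mass_eq_outer, mass_eq_outer, PMF.toOuterMeasure_map_apply]

theorem ennreal_one_sub_half : (1 : ℝ≥0∞) - 1/2 = 1/2 := by norm_num

theorem ennreal_one_sub_two5 : (1 : ℝ≥0∞) - 2/5 = 3/5 := by
  rw [ENNReal.sub_eq_of_eq_add (by simp [ENNReal.div_eq_top])]
  rw [ENNReal.div_add_div_same]
  norm_num
  rw [ENNReal.div_self (by norm_num) (by norm_num)]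

open Classical in
theorem mass_twoPoint {α : Type} (x y : α) (E : Set α) :
    PLTS.mass (twoPoint x y) E =
      (if x ∈ E then 1/2 else 0) + (if y ∈ E then 1/2 else 0) := by
  rw [twoPoint, mass_map, mass_eq_outer, PMF.toOuterMeasure_apply, tsum_bool]
  have h1 : (false : Bool) ∈ (fun b => if b then x else y) ⁻¹' E ↔ y ∈ E := by simp
  have h2 : (true : Bool) ∈ (fun b => if b then x else y) ⁻¹' E ↔ x ∈ E := by simp
  by_cases hx : x ∈ E <;> by_cases hy : y ∈ E <;>
    simp [Set.indicator, h1, h2, hx, hy, PMF.bernoulli_apply, ennreal_one_sub_half,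
      add_comm] <;> norm_num

open Classical in
theorem mass_wPoint {α : Type} (x y : α) (E : Set α) :
    PLTS.mass (wPoint x y) E =
      (if x ∈ E then 2/5 else 0) + (if y ∈ E then 3/5 else 0) := by
  rw [wPoint, mass_map, mass_eq_outer, PMF.toOuterMeasure_apply, tsum_bool]
  have h1 : (false : Bool) ∈ (fun b => if b then x else y) ⁻¹' E ↔ y ∈ E := by simp
  have h2 : (true : Bool) ∈ (fun b => if b then x else y) ⁻¹' E ↔ x ∈ E := by simp
  by_cases hx : x ∈ E <;> by_cases hy : y ∈ E <;>
    simp [Set.indicator, h1, h2, hx, hy, PMF.bernoulli_apply, ennreal_one_sub_two5,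
      add_comm] <;> norm_num

open Classical in
theorem mass_threePoint {α : Type} (x y z : α) (E : Set α) :
    PLTS.mass (threePoint x y z) E =
      (if x ∈ E then 1/3 else 0) + (if y ∈ E then 1/3 else 0) +
        (if z ∈ E then 1/3 else 0) := by
  classical
  rw [threePoint, mass_map, mass_eq_outer, PMF.toOuterMeasure_apply, tsum_fintype]
  rw [Fin.sum_univ_three]
  have e0 : ((0 : Fin 3) ∈ (fun i : Fin 3 => if i = 0 then x else if i = 1 then y else z) ⁻¹' E)
      ↔ x ∈ E := by simp
  have e1 : ((1 : Fin 3) ∈ (fun i : Fin 3 => if i = 0 then x else if i = 1 then y else z) ⁻¹' E)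
      ↔ y ∈ E := by simp [Set.mem_preimage]
  have e2 : ((2 : Fin 3) ∈ (fun i : Fin 3 => if i = 0 then x else if i = 1 then y else z) ⁻¹' E)
      ↔ z ∈ E := by simp [Set.mem_preimage]
  have u : ∀ i : Fin 3, PMF.uniformOfFintype (Fin 3) i = 1/3 := by
    intro i; rw [PMF.uniformOfFintype_apply]; norm_num
  by_cases hx : x ∈ E <;> by_cases hy : y ∈ E <;> by_cases hz : z ∈ E <;>
    simp [Set.indicator, e0, e1, e2, hx, hy, hz, u] <;> norm_num

theorem map_twoPoint {α β : Type} (f : α → β) (x y : α) :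
    (twoPoint x y).map f = twoPoint (f x) (f y) := by
  rw [twoPoint, twoPoint, PMF.map_comp]
  congr 1
  funext b
  cases b <;> simp

theorem map_wPoint {α β : Type} (f : α → β) (x y : α) :
    (wPoint x y).map f = wPoint (f x) (f y) := by
  rw [wPoint, wPoint, PMF.map_comp]
  congr 1
  funext b
  cases b <;> simp

theorem map_threePoint {α β : Type} (f : α → β) (x y z : α) :
    (threePoint x y z).map f = threePoint (f x) (f y) (f z) := by
  rw [threePoint, threePoint, PMF.map_comp]
  congr 1
  funext i
  fin_cases i <;> simp

/-! ### A deterministic description of the transition structure -/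

section Rules

variable {Q : Type} (δ : Q → Gate Q) (F : Set Q) (q₀ : Q)

open Classical in
/-- The unique rule available for control state `s` and top symbol `Y`. -/
noncomputable def ruleD : CS Q → OCSym → Option (PMF (CS Q × List OCSym))
  | CS.base q, OCSym.Z =>
      if q ∈ F then some (PMF.pure (CS.r, [OCSym.Z])) else none
  | CS.base q, OCSym.X =>
      match δ q with
      | Gate.or _ _ => some (twoPoint (CS.r1 q, [OCSym.X]) (CS.r2 q, [OCSym.X]))
      | Gate.and _ _ => some (twoPoint (CS.u12 q, [OCSym.X]) (CS.u1'2' q, [OCSym.X]))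
  | CS.prim q, OCSym.X =>
      match δ q with
      | Gate.or _ _ => some (twoPoint (CS.r1' q, [OCSym.X]) (CS.r2' q, [OCSym.X]))
      | Gate.and _ _ => some (twoPoint (CS.u12' q, [OCSym.X]) (CS.u1'2 q, [OCSym.X]))
  | CS.r1 q, OCSym.X =>
      match δ q with
      | Gate.or q₁ _ => some (twoPoint (CS.base q₁, []) (CS.s1 q, [OCSym.X]))
      | Gate.and _ _ => none
  | CS.r2 q, OCSym.X =>
      match δ q with
      | Gate.or _ q₂ => some (twoPoint (CS.base q₂, []) (CS.s2 q, [OCSym.X]))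
      | Gate.and _ _ => none
  | CS.r1' q, OCSym.X =>
      match δ q with
      | Gate.or q₁ _ => some (twoPoint (CS.prim q₁, []) (CS.s1 q, [OCSym.X]))
      | Gate.and _ _ => none
  | CS.r2' q, OCSym.X =>
      match δ q with
      | Gate.or _ q₂ => some (twoPoint (CS.prim q₂, []) (CS.s2 q, [OCSym.X]))
      | Gate.and _ _ => none
  | CS.u12 q, OCSym.X =>
      match δ q with
      | Gate.and q₁ q₂ => some (twoPoint (CS.base q₁, []) (CS.base q₂, []))
      | Gate.or _ _ => none
  | CS.u1'2' q, OCSym.X =>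
      match δ q with
      | Gate.and q₁ q₂ => some (twoPoint (CS.prim q₁, []) (CS.prim q₂, []))
      | Gate.or _ _ => none
  | CS.u12' q, OCSym.X =>
      match δ q with
      | Gate.and q₁ q₂ => some (twoPoint (CS.base q₁, []) (CS.prim q₂, []))
      | Gate.or _ _ => none
  | CS.u1'2 q, OCSym.X =>
      match δ q with
      | Gate.and q₁ q₂ => some (twoPoint (CS.prim q₁, []) (CS.base q₂, []))
      | Gate.or _ _ => none
  | CS.s1 q, OCSym.X => some (twoPoint (CS.s1 q, [OCSym.X]) (CS.r, []))
  | CS.s2 q, OCSym.X => some (wPoint (CS.s2 q, [OCSym.X]) (CS.r, []))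
  | CS.p, OCSym.X => some (threePoint (CS.p, [OCSym.X, OCSym.X])
      (CS.base q₀, []) (CS.r, [OCSym.X]))
  | CS.p', OCSym.X => some (threePoint (CS.p', [OCSym.X, OCSym.X])
      (CS.prim q₀, []) (CS.r, [OCSym.X]))
  | _, _ => none

/-- The unique transition distribution of a configuration. -/
noncomputable def stepD : CS Q × List OCSym → Option (PMF (CS Q × List OCSym))
  | (_, []) => none
  | (s, Y :: β) => (ruleD δ F q₀ s Y).map (fun e => e.map (fun pα => (pα.1, pα.2 ++ β)))

theorem rule_iff (s : CS Q) (Y : OCSym) (e : PMF (CS Q × List OCSym)) :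
    AfaRule δ F q₀ s Y () e ↔ ruleD δ F q₀ s Y = some e := by
  classical
  constructor
  · intro h
    cases h <;> simp_all [ruleD]
  · intro h
    cases s <;> cases Y <;> simp [ruleD] at h
    case base.X q =>
      rcases hg : δ q with ⟨q₁, q₂⟩ | ⟨q₁, q₂⟩ <;> rw [hg] at h <;> simp at h <;>
        rw [← h]
      · exact AfaRule.andg₁ q q₁ q₂ hg
      · exact AfaRule.org₁ q q₁ q₂ hg
    case base.Z q =>
      obtain ⟨hf, he⟩ := h
      rw [← he]; exact AfaRule.acc q hf
    case prim.X q =>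
      rcases hg : δ q with ⟨q₁, q₂⟩ | ⟨q₁, q₂⟩ <;> rw [hg] at h <;> simp at h <;>
        rw [← h]
      · exact AfaRule.andg₂ q q₁ q₂ hg
      · exact AfaRule.org₂ q q₁ q₂ hg
    case r1.X q =>
      rcases hg : δ q with ⟨q₁, q₂⟩ | ⟨q₁, q₂⟩ <;> rw [hg] at h <;> simp at h
      rw [← h]; exact AfaRule.org₃ q q₁ q₂ hg
    case r2.X q =>
      rcases hg : δ q with ⟨q₁, q₂⟩ | ⟨q₁, q₂⟩ <;> rw [hg] at h <;> simp at h
      rw [← h]; exact AfaRule.org₄ q q₁ q₂ hg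
    case r1'.X q =>
      rcases hg : δ q with ⟨q₁, q₂⟩ | ⟨q₁, q₂⟩ <;> rw [hg] at h <;> simp at h
      rw [← h]; exact AfaRule.org₅ q q₁ q₂ hg
    case r2'.X q =>
      rcases hg : δ q with ⟨q₁, q₂⟩ | ⟨q₁, q₂⟩ <;> rw [hg] at h <;> simp at h
      rw [← h]; exact AfaRule.org₆ q q₁ q₂ hg
    case s1.X q => rw [← h]; exact AfaRule.sg₁ q
    case s2.X q => rw [← h]; exact AfaRule.sg₂ q
    case u12.X q =>
      rcases hg : δ q with ⟨q₁, q₂⟩ | ⟨q₁, q₂⟩ <;> rw [hg] at h <;> simp at h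
      rw [← h]; exact AfaRule.andg₃ q q₁ q₂ hg
    case u12'.X q =>
      rcases hg : δ q with ⟨q₁, q₂⟩ | ⟨q₁, q₂⟩ <;> rw [hg] at h <;> simp at h
      rw [← h]; exact AfaRule.andg₅ q q₁ q₂ hg
    case u1'2.X q =>
      rcases hg : δ q with ⟨q₁, q₂⟩ | ⟨q₁, q₂⟩ <;> rw [hg] at h <;> simp at h
      rw [← h]; exact AfaRule.andg₆ q q₁ q₂ hg
    case u1'2'.X q =>
      rcases hg : δ q with ⟨q₁, q₂⟩ | ⟨q₁, q₂⟩ <;> rw [hg] at h <;> simp at h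
      rw [← h]; exact AfaRule.andg₄ q q₁ q₂ hg
    case p.X => rw [← h]; exact AfaRule.pinit
    case p'.X => rw [← h]; exact AfaRule.pinit'

theorem tr_iff (c : CS Q × List OCSym) (a : Unit)
    (d : PMF (CS Q × List OCSym)) :
    (PPDARules.plts (AfaRule δ F q₀ : PPDARules (CS Q) OCSym Unit)).Tr c a d ↔
      stepD δ F q₀ c = some d := by
  obtain ⟨s, γ⟩ := c
  constructor
  · rintro ⟨q, Y, β, e, hc, hr, rfl⟩
    obtain ⟨rfl, rfl⟩ := Prod.mk.injEq .. ▸ hc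
    rw [rule_iff] at hr
    simp [stepD, hr]
  · intro h
    cases γ with
    | nil => simp [stepD] at h
    | cons Y β =>
      simp only [stepD, Option.map_eq_some_iff] at h
      obtain ⟨e, he, rfl⟩ := h
      exact ⟨s, Y, β, e, rfl, (rule_iff δ F q₀ s Y e).2 he, rfl⟩

/-! ### Stacks -/

/-- The stack `XⁿZ`. -/
def stk (n : ℕ) : List OCSym := List.replicate n OCSym.X ++ [OCSym.Z]

theorem stk_succ (n : ℕ) : stk (n + 1) = OCSym.X :: stk n := rfl

theorem stk_injective : Function.Injective stk := by
  intro m n h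
  have := congrArg List.length h
  simpa [stk] using this

theorem stk_zero : stk 0 = [OCSym.Z] := rfl

/-! ### The candidate bisimulation -/

/-- `γ = XⁿZ` and the word of length `n` is not accepted from `q`. -/
def condB (q : Q) (γ : List OCSym) : Prop :=
  ∃ n, γ = stk n ∧ ¬ AfaAcc δ F n q

/-- condition pairing `r1'` with `r1`. -/
def condR1 (q : Q) (γ : List OCSym) : Prop :=
  ∃ n q₁ q₂, δ q = Gate.or q₁ q₂ ∧ γ = stk (n+1) ∧ ¬ AfaAcc δ F n q₁

def condR2 (q : Q) (γ : List OCSym) : Prop :=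
  ∃ n q₁ q₂, δ q = Gate.or q₁ q₂ ∧ γ = stk (n+1) ∧ ¬ AfaAcc δ F n q₂

def condU1 (q : Q) (γ : List OCSym) : Prop :=
  ∃ n q₁ q₂, δ q = Gate.and q₁ q₂ ∧ γ = stk (n+1) ∧ ¬ AfaAcc δ F n q₁

def condU2 (q : Q) (γ : List OCSym) : Prop :=
  ∃ n q₁ q₂, δ q = Gate.and q₁ q₂ ∧ γ = stk (n+1) ∧ ¬ AfaAcc δ F n q₂

def condP (γ : List OCSym) : Prop :=
  (∀ n, ¬ AfaAcc δ F n q₀) ∧ ∃ m, γ = stk m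

open Classical in
/-- Canonical representative of the equivalence class. -/
noncomputable def rep : CS Q × List OCSym → CS Q × List OCSym
  | (CS.prim q, γ) => if condB δ F q γ then (CS.base q, γ) else (CS.prim q, γ)
  | (CS.r1' q, γ) => if condR1 δ F q γ then (CS.r1 q, γ) else (CS.r1' q, γ)
  | (CS.r2' q, γ) => if condR2 δ F q γ then (CS.r2 q, γ) else (CS.r2' q, γ)
  | (CS.u1'2 q, γ) => if condU1 δ F q γ then (CS.u12 q, γ) else (CS.u1'2 q, γ)
  | (CS.u12' q, γ) => if condU2 δ F q γ then (CS.u12 q, γ) else (CS.u12' q, γ)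
  | (CS.u1'2' q, γ) =>
      if condU1 δ F q γ then
        (if condU2 δ F q γ then (CS.u12 q, γ) else (CS.u12' q, γ))
      else
        (if condU2 δ F q γ then (CS.u1'2 q, γ) else (CS.u1'2' q, γ))
  | (CS.p', γ) => if condP δ F q₀ γ then (CS.p, γ) else (CS.p', γ)
  | c => c

/-- The candidate bisimulation relation. -/
def Rel (c c' : CS Q × List OCSym) : Prop :=
  rep δ F q₀ c = rep δ F q₀ c'

theorem Rel_equivalence : Equivalence (Rel δ F q₀) :=
  ⟨fun _ => rfl, Eq.symm, Eq.trans⟩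

theorem requiv_refl (r : CS Q × List OCSym → CS Q × List OCSym → Prop)
    (d : PMF (CS Q × List OCSym)) : PLTS.REquiv r d d := fun _ => rfl

theorem requiv_two {x y x' y' : CS Q × List OCSym}
    (h1 : Rel δ F q₀ x x') (h2 : Rel δ F q₀ y y') :
    PLTS.REquiv (Rel δ F q₀) (twoPoint x y) (twoPoint x' y') := by
  intro s
  classical
  rw [mass_twoPoint, mass_twoPoint]
  have e1 : (x ∈ {t | Rel δ F q₀ s t}) = (x' ∈ {t | Rel δ F q₀ s t}) := by
    simp only [Set.mem_setOf_eq, Rel]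
    rw [show rep δ F q₀ x = rep δ F q₀ x' from h1]
  have e2 : (y ∈ {t | Rel δ F q₀ s t}) = (y' ∈ {t | Rel δ F q₀ s t}) := by
    simp only [Set.mem_setOf_eq, Rel]
    rw [show rep δ F q₀ y = rep δ F q₀ y' from h2]
  rw [if_congr (iff_of_eq e1) rfl rfl, if_congr (iff_of_eq e2) rfl rfl]

theorem requiv_two_cross {x y x' y' : CS Q × List OCSym}
    (h1 : Rel δ F q₀ x y') (h2 : Rel δ F q₀ y x') :
    PLTS.REquiv (Rel δ F q₀) (twoPoint x y) (twoPoint x' y') := by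
  intro s
  classical
  rw [mass_twoPoint, mass_twoPoint]
  have e1 : (x ∈ {t | Rel δ F q₀ s t}) = (y' ∈ {t | Rel δ F q₀ s t}) := by
    simp only [Set.mem_setOf_eq, Rel]
    rw [show rep δ F q₀ x = rep δ F q₀ y' from h1]
  have e2 : (y ∈ {t | Rel δ F q₀ s t}) = (x' ∈ {t | Rel δ F q₀ s t}) := by
    simp only [Set.mem_setOf_eq, Rel]
    rw [show rep δ F q₀ y = rep δ F q₀ x' from h2]
  rw [if_congr (iff_of_eq e1) rfl rfl, if_congr (iff_of_eq e2) rfl rfl]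
  exact add_comm _ _

theorem requiv_three {x y z x' y' z' : CS Q × List OCSym}
    (h1 : Rel δ F q₀ x x') (h2 : Rel δ F q₀ y y') (h3 : Rel δ F q₀ z z') :
    PLTS.REquiv (Rel δ F q₀) (threePoint x y z) (threePoint x' y' z') := by
  intro s
  classical
  rw [mass_threePoint, mass_threePoint]
  have e1 : (x ∈ {t | Rel δ F q₀ s t}) = (x' ∈ {t | Rel δ F q₀ s t}) := by
    simp only [Set.mem_setOf_eq, Rel]
    rw [show rep δ F q₀ x = rep δ F q₀ x' from h1]
  have e2 : (y ∈ {t | Rel δ F q₀ s t}) = (y' ∈ {t | Rel δ F q₀ s t}) := by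
    simp only [Set.mem_setOf_eq, Rel]
    rw [show rep δ F q₀ y = rep δ F q₀ y' from h2]
  have e3 : (z ∈ {t | Rel δ F q₀ s t}) = (z' ∈ {t | Rel δ F q₀ s t}) := by
    simp only [Set.mem_setOf_eq, Rel]
    rw [show rep δ F q₀ z = rep δ F q₀ z' from h3]
  rw [if_congr (iff_of_eq e1) rfl rfl, if_congr (iff_of_eq e2) rfl rfl,
    if_congr (iff_of_eq e3) rfl rfl]

/-- One-sided matching in terms of `stepD`. -/
def Matches (c c' : CS Q × List OCSym) : Prop :=
  ∀ d, stepD δ F q₀ c = some d →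
    ∃ d', stepD δ F q₀ c' = some d' ∧ PLTS.REquiv (Rel δ F q₀) d d'

theorem matches_refl (c : CS Q × List OCSym) : Matches δ F q₀ c c :=
  fun d hd => ⟨d, hd, requiv_refl _ _⟩

theorem requiv_symm {r : CS Q × List OCSym → CS Q × List OCSym → Prop}
    {d d' : PMF (CS Q × List OCSym)} (h : PLTS.REquiv r d d') :
    PLTS.REquiv r d' d := fun s => (h s).symm

theorem mpair_of {c c' e e'} (h : stepD δ F q₀ c = some e)
    (h' : stepD δ F q₀ c' = some e')
    (hre : PLTS.REquiv (Rel δ F q₀) e e') :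
    Matches δ F q₀ c c' ∧ Matches δ F q₀ c' c := by
  constructor
  · intro d hd
    rw [h] at hd
    cases hd
    exact ⟨e', h', hre⟩
  · intro d hd
    rw [h'] at hd
    cases hd
    exact ⟨e, h, requiv_symm hre⟩

theorem mpair_none {c c'} (h : stepD δ F q₀ c = none)
    (h' : stepD δ F q₀ c' = none) :
    Matches δ F q₀ c c' ∧ Matches δ F q₀ c' c := by
  constructor <;> intro d hd
  · rw [h] at hd; cases hd
  · rw [h'] at hd; cases hd

/-! ### Unfolding lemmas for acceptance and conditions -/

theorem acc_zero (q : Q) : AfaAcc δ F 0 q ↔ q ∈ F := Iff.rfl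

theorem acc_succ_or {q q₁ q₂ : Q} (hg : δ q = Gate.or q₁ q₂) (n : ℕ) :
    AfaAcc δ F (n+1) q ↔ (AfaAcc δ F n q₁ ∨ AfaAcc δ F n q₂) := by
  simp [AfaAcc, hg]

theorem acc_succ_and {q q₁ q₂ : Q} (hg : δ q = Gate.and q₁ q₂) (n : ℕ) :
    AfaAcc δ F (n+1) q ↔ (AfaAcc δ F n q₁ ∧ AfaAcc δ F n q₂) := by
  simp [AfaAcc, hg]

theorem condB_stk (q : Q) (n : ℕ) :
    condB δ F q (stk n) ↔ ¬ AfaAcc δ F n q := by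
  constructor
  · rintro ⟨m, hm, h⟩
    cases stk_injective hm
    exact h
  · intro h; exact ⟨n, rfl, h⟩

theorem condU1_stk {q q₁ q₂ : Q} (hg : δ q = Gate.and q₁ q₂) (n : ℕ) :
    condU1 δ F q (stk (n+1)) ↔ ¬ AfaAcc δ F n q₁ := by
  constructor
  · rintro ⟨m, a, b, hδ, hs, h⟩
    have hm : n + 1 = m + 1 := by
      have := stk_injective hs; omega
    obtain rfl : m = n := by omega
    rw [hg] at hδ
    cases hδ
    exact h
  · intro h; exact ⟨n, q₁, q₂, hg, rfl, h⟩

theorem condU2_stk {q q₁ q₂ : Q} (hg : δ q = Gate.and q₁ q₂) (n : ℕ) :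
    condU2 δ F q (stk (n+1)) ↔ ¬ AfaAcc δ F n q₂ := by
  constructor
  · rintro ⟨m, a, b, hδ, hs, h⟩
    have hm : n + 1 = m + 1 := by
      have := stk_injective hs; omega
    obtain rfl : m = n := by omega
    rw [hg] at hδ
    cases hδ
    exact h
  · intro h; exact ⟨n, q₁, q₂, hg, rfl, h⟩

theorem condR1_stk {q q₁ q₂ : Q} (hg : δ q = Gate.or q₁ q₂) (n : ℕ) :
    condR1 δ F q (stk (n+1)) ↔ ¬ AfaAcc δ F n q₁ := by
  constructor
  · rintro ⟨m, a, b, hδ, hs, h⟩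
    have hm : n + 1 = m + 1 := by
      have := stk_injective hs; omega
    obtain rfl : m = n := by omega
    rw [hg] at hδ
    cases hδ
    exact h
  · intro h; exact ⟨n, q₁, q₂, hg, rfl, h⟩

theorem condR2_stk {q q₁ q₂ : Q} (hg : δ q = Gate.or q₁ q₂) (n : ℕ) :
    condR2 δ F q (stk (n+1)) ↔ ¬ AfaAcc δ F n q₂ := by
  constructor
  · rintro ⟨m, a, b, hδ, hs, h⟩
    have hm : n + 1 = m + 1 := by
      have := stk_injective hs; omega
    obtain rfl : m = n := by omega
    rw [hg] at hδ
    cases hδ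
    exact h
  · intro h; exact ⟨n, q₁, q₂, hg, rfl, h⟩

/-! ### `Rel` facts -/

theorem rel_prim_base {q : Q} {n : ℕ} (h : ¬ AfaAcc δ F n q) :
    Rel δ F q₀ (CS.prim q, stk n) (CS.base q, stk n) := by
  unfold Rel
  have hc : condB δ F q (stk n) := ⟨n, rfl, h⟩
  simp [rep, hc]

theorem rel_r1' {q q₁ q₂ : Q} {n : ℕ} (hg : δ q = Gate.or q₁ q₂)
    (h : ¬ AfaAcc δ F n q₁) :
    Rel δ F q₀ (CS.r1' q, stk (n+1)) (CS.r1 q, stk (n+1)) := by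
  unfold Rel
  have hc : condR1 δ F q (stk (n+1)) := ⟨n, q₁, q₂, hg, rfl, h⟩
  simp [rep, hc]

theorem rel_r2' {q q₁ q₂ : Q} {n : ℕ} (hg : δ q = Gate.or q₁ q₂)
    (h : ¬ AfaAcc δ F n q₂) :
    Rel δ F q₀ (CS.r2' q, stk (n+1)) (CS.r2 q, stk (n+1)) := by
  unfold Rel
  have hc : condR2 δ F q (stk (n+1)) := ⟨n, q₁, q₂, hg, rfl, h⟩
  simp [rep, hc]

theorem rel_u1'2 {q q₁ q₂ : Q} {n : ℕ} (hg : δ q = Gate.and q₁ q₂)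
    (h : ¬ AfaAcc δ F n q₁) :
    Rel δ F q₀ (CS.u1'2 q, stk (n+1)) (CS.u12 q, stk (n+1)) := by
  unfold Rel
  have hc : condU1 δ F q (stk (n+1)) := ⟨n, q₁, q₂, hg, rfl, h⟩
  simp [rep, hc]

theorem rel_u12' {q q₁ q₂ : Q} {n : ℕ} (hg : δ q = Gate.and q₁ q₂)
    (h : ¬ AfaAcc δ F n q₂) :
    Rel δ F q₀ (CS.u12' q, stk (n+1)) (CS.u12 q, stk (n+1)) := by
  unfold Rel
  have hc : condU2 δ F q (stk (n+1)) := ⟨n, q₁, q₂, hg, rfl, h⟩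
  simp [rep, hc]

theorem rel_u12'_u1'2' {q q₁ q₂ : Q} {n : ℕ} (hg : δ q = Gate.and q₁ q₂)
    (h : ¬ AfaAcc δ F n q₁) :
    Rel δ F q₀ (CS.u12' q, stk (n+1)) (CS.u1'2' q, stk (n+1)) := by
  unfold Rel
  have hc : condU1 δ F q (stk (n+1)) := ⟨n, q₁, q₂, hg, rfl, h⟩
  simp [rep, hc]

theorem rel_u1'2_u1'2' {q q₁ q₂ : Q} {n : ℕ} (hg : δ q = Gate.and q₁ q₂)
    (h : ¬ AfaAcc δ F n q₂) :
    Rel δ F q₀ (CS.u1'2 q, stk (n+1)) (CS.u1'2' q, stk (n+1)) := by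
  unfold Rel
  have hc : condU2 δ F q (stk (n+1)) := ⟨n, q₁, q₂, hg, rfl, h⟩
  simp [rep, hc]

theorem rel_p'_p {m : ℕ} (h : ∀ n, ¬ AfaAcc δ F n q₀) :
    Rel δ F q₀ (CS.p', stk m) (CS.p, stk m) := by
  unfold Rel
  have hc : condP δ F q₀ (stk m) := ⟨h, m, rfl⟩
  simp [rep, hc]

/-! ### Matching each configuration with its representative -/

theorem match_rep (c : CS Q × List OCSym) :
    Matches δ F q₀ c (rep δ F q₀ c) ∧ Matches δ F q₀ (rep δ F q₀ c) c := by
  classical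
  obtain ⟨s, γ⟩ := c
  have hrefl : ∀ c₀ : CS Q × List OCSym,
      Matches δ F q₀ c₀ c₀ ∧ Matches δ F q₀ c₀ c₀ :=
    fun c₀ => ⟨matches_refl δ F q₀ c₀, matches_refl δ F q₀ c₀⟩
  cases s with
  | p => simpa [rep] using hrefl (CS.p, γ)
  | r => simpa [rep] using hrefl (CS.r, γ)
  | base q => simpa [rep] using hrefl (CS.base q, γ)
  | r1 q => simpa [rep] using hrefl (CS.r1 q, γ)
  | r2 q => simpa [rep] using hrefl (CS.r2 q, γ)
  | s1 q => simpa [rep] using hrefl (CS.s1 q, γ)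
  | s2 q => simpa [rep] using hrefl (CS.s2 q, γ)
  | u12 q => simpa [rep] using hrefl (CS.u12 q, γ)
  | prim q =>
    by_cases hc : condB δ F q γ
    · have hrep : rep δ F q₀ (CS.prim q, γ) = (CS.base q, γ) := by simp [rep, hc]
      rw [hrep]
      obtain ⟨n, rfl, hacc⟩ := hc
      cases n with
      | zero =>
        have hF : q ∉ F := by simpa [AfaAcc] using hacc
        exact mpair_none δ F q₀ (by simp [stk_zero, stepD, ruleD])
          (by simp [stk_zero, stepD, ruleD, hF])
      | succ n =>
        rw [stk_succ]
        rcases hg : δ q with ⟨q₁, q₂⟩ | ⟨q₁, q₂⟩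
        · -- Gate.and
          have hna : ¬ (AfaAcc δ F n q₁ ∧ AfaAcc δ F n q₂) := by
            rw [← acc_succ_and δ F hg n]; exact hacc
          have h1 : stepD δ F q₀ (CS.prim q, OCSym.X :: stk n) =
              some (twoPoint (CS.u12' q, stk (n+1)) (CS.u1'2 q, stk (n+1))) := by
            simp [stepD, ruleD, hg, map_twoPoint, stk_succ]
          have h2 : stepD δ F q₀ (CS.base q, OCSym.X :: stk n) =
              some (twoPoint (CS.u12 q, stk (n+1)) (CS.u1'2' q, stk (n+1))) := by
            simp [stepD, ruleD, hg, map_twoPoint, stk_succ]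
          by_cases hA1 : AfaAcc δ F n q₁
          · have hA2 : ¬ AfaAcc δ F n q₂ := fun h => hna ⟨hA1, h⟩
            exact mpair_of δ F q₀ h1 h2
              (requiv_two δ F q₀ (rel_u12' δ F q₀ hg hA2)
                (rel_u1'2_u1'2' δ F q₀ hg hA2))
          · exact mpair_of δ F q₀ h1 h2
              (requiv_two_cross δ F q₀ (rel_u12'_u1'2' δ F q₀ hg hA1)
                (rel_u1'2 δ F q₀ hg hA1))
        · -- Gate.or
          have hna1 : ¬ AfaAcc δ F n q₁ := fun h =>
            hacc ((acc_succ_or δ F hg n).2 (Or.inl h))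
          have hna2 : ¬ AfaAcc δ F n q₂ := fun h =>
            hacc ((acc_succ_or δ F hg n).2 (Or.inr h))
          have h1 : stepD δ F q₀ (CS.prim q, OCSym.X :: stk n) =
              some (twoPoint (CS.r1' q, stk (n+1)) (CS.r2' q, stk (n+1))) := by
            simp [stepD, ruleD, hg, map_twoPoint, stk_succ]
          have h2 : stepD δ F q₀ (CS.base q, OCSym.X :: stk n) =
              some (twoPoint (CS.r1 q, stk (n+1)) (CS.r2 q, stk (n+1))) := by
            simp [stepD, ruleD, hg, map_twoPoint, stk_succ]
          exact mpair_of δ F q₀ h1 h2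
            (requiv_two δ F q₀ (rel_r1' δ F q₀ hg hna1) (rel_r2' δ F q₀ hg hna2))
    · simpa [rep, hc] using hrefl (CS.prim q, γ)
  | r1' q =>
    by_cases hc : condR1 δ F q γ
    · have hrep : rep δ F q₀ (CS.r1' q, γ) = (CS.r1 q, γ) := by simp [rep, hc]
      rw [hrep]
      obtain ⟨n, q₁, q₂, hg, rfl, hacc⟩ := hc
      rw [stk_succ]
      have h1 : stepD δ F q₀ (CS.r1' q, OCSym.X :: stk n) =
          some (twoPoint (CS.prim q₁, stk n) (CS.s1 q, stk (n+1))) := by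
        simp [stepD, ruleD, hg, map_twoPoint, stk_succ]
      have h2 : stepD δ F q₀ (CS.r1 q, OCSym.X :: stk n) =
          some (twoPoint (CS.base q₁, stk n) (CS.s1 q, stk (n+1))) := by
        simp [stepD, ruleD, hg, map_twoPoint, stk_succ]
      exact mpair_of δ F q₀ h1 h2
        (requiv_two δ F q₀ (rel_prim_base δ F q₀ hacc) rfl)
    · simpa [rep, hc] using hrefl (CS.r1' q, γ)
  | r2' q =>
    by_cases hc : condR2 δ F q γ
    · have hrep : rep δ F q₀ (CS.r2' q, γ) = (CS.r2 q, γ) := by simp [rep, hc]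
      rw [hrep]
      obtain ⟨n, q₁, q₂, hg, rfl, hacc⟩ := hc
      rw [stk_succ]
      have h1 : stepD δ F q₀ (CS.r2' q, OCSym.X :: stk n) =
          some (twoPoint (CS.prim q₂, stk n) (CS.s2 q, stk (n+1))) := by
        simp [stepD, ruleD, hg, map_twoPoint, stk_succ]
      have h2 : stepD δ F q₀ (CS.r2 q, OCSym.X :: stk n) =
          some (twoPoint (CS.base q₂, stk n) (CS.s2 q, stk (n+1))) := by
        simp [stepD, ruleD, hg, map_twoPoint, stk_succ]
      exact mpair_of δ F q₀ h1 h2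
        (requiv_two δ F q₀ (rel_prim_base δ F q₀ hacc) rfl)
    · simpa [rep, hc] using hrefl (CS.r2' q, γ)
  | u1'2 q =>
    by_cases hc : condU1 δ F q γ
    · have hrep : rep δ F q₀ (CS.u1'2 q, γ) = (CS.u12 q, γ) := by simp [rep, hc]
      rw [hrep]
      obtain ⟨n, q₁, q₂, hg, rfl, hacc⟩ := hc
      rw [stk_succ]
      have h1 : stepD δ F q₀ (CS.u1'2 q, OCSym.X :: stk n) =
          some (twoPoint (CS.prim q₁, stk n) (CS.base q₂, stk n)) := by
        simp [stepD, ruleD, hg, map_twoPoint, stk_succ]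
      have h2 : stepD δ F q₀ (CS.u12 q, OCSym.X :: stk n) =
          some (twoPoint (CS.base q₁, stk n) (CS.base q₂, stk n)) := by
        simp [stepD, ruleD, hg, map_twoPoint, stk_succ]
      exact mpair_of δ F q₀ h1 h2
        (requiv_two δ F q₀ (rel_prim_base δ F q₀ hacc) rfl)
    · simpa [rep, hc] using hrefl (CS.u1'2 q, γ)
  | u12' q =>
    by_cases hc : condU2 δ F q γ
    · have hrep : rep δ F q₀ (CS.u12' q, γ) = (CS.u12 q, γ) := by simp [rep, hc]
      rw [hrep]
      obtain ⟨n, q₁, q₂, hg, rfl, hacc⟩ := hc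
      rw [stk_succ]
      have h1 : stepD δ F q₀ (CS.u12' q, OCSym.X :: stk n) =
          some (twoPoint (CS.base q₁, stk n) (CS.prim q₂, stk n)) := by
        simp [stepD, ruleD, hg, map_twoPoint, stk_succ]
      have h2 : stepD δ F q₀ (CS.u12 q, OCSym.X :: stk n) =
          some (twoPoint (CS.base q₁, stk n) (CS.base q₂, stk n)) := by
        simp [stepD, ruleD, hg, map_twoPoint, stk_succ]
      exact mpair_of δ F q₀ h1 h2
        (requiv_two δ F q₀ rfl (rel_prim_base δ F q₀ hacc))
    · simpa [rep, hc] using hrefl (CS.u12' q, γ)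
  | u1'2' q =>
    by_cases hc1 : condU1 δ F q γ
    · by_cases hc2 : condU2 δ F q γ
      · have hrep : rep δ F q₀ (CS.u1'2' q, γ) = (CS.u12 q, γ) := by
          simp [rep, hc1, hc2]
        rw [hrep]
        obtain ⟨n, q₁, q₂, hg, rfl, hacc1⟩ := hc1
        have hacc2 : ¬ AfaAcc δ F n q₂ := (condU2_stk δ F hg n).1 hc2
        rw [stk_succ]
        have h1 : stepD δ F q₀ (CS.u1'2' q, OCSym.X :: stk n) =
            some (twoPoint (CS.prim q₁, stk n) (CS.prim q₂, stk n)) := by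
          simp [stepD, ruleD, hg, map_twoPoint, stk_succ]
        have h2 : stepD δ F q₀ (CS.u12 q, OCSym.X :: stk n) =
            some (twoPoint (CS.base q₁, stk n) (CS.base q₂, stk n)) := by
          simp [stepD, ruleD, hg, map_twoPoint, stk_succ]
        exact mpair_of δ F q₀ h1 h2
          (requiv_two δ F q₀ (rel_prim_base δ F q₀ hacc1)
            (rel_prim_base δ F q₀ hacc2))
      · have hrep : rep δ F q₀ (CS.u1'2' q, γ) = (CS.u12' q, γ) := by
          simp [rep, hc1, hc2]
        rw [hrep]
        obtain ⟨n, q₁, q₂, hg, rfl, hacc1⟩ := hc1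
        rw [stk_succ]
        have h1 : stepD δ F q₀ (CS.u1'2' q, OCSym.X :: stk n) =
            some (twoPoint (CS.prim q₁, stk n) (CS.prim q₂, stk n)) := by
          simp [stepD, ruleD, hg, map_twoPoint, stk_succ]
        have h2 : stepD δ F q₀ (CS.u12' q, OCSym.X :: stk n) =
            some (twoPoint (CS.base q₁, stk n) (CS.prim q₂, stk n)) := by
          simp [stepD, ruleD, hg, map_twoPoint, stk_succ]
        exact mpair_of δ F q₀ h1 h2
          (requiv_two δ F q₀ (rel_prim_base δ F q₀ hacc1) rfl)
    · by_cases hc2 : condU2 δ F q γ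
      · have hrep : rep δ F q₀ (CS.u1'2' q, γ) = (CS.u1'2 q, γ) := by
          simp [rep, hc1, hc2]
        rw [hrep]
        obtain ⟨n, q₁, q₂, hg, rfl, hacc2⟩ := hc2
        rw [stk_succ]
        have h1 : stepD δ F q₀ (CS.u1'2' q, OCSym.X :: stk n) =
            some (twoPoint (CS.prim q₁, stk n) (CS.prim q₂, stk n)) := by
          simp [stepD, ruleD, hg, map_twoPoint, stk_succ]
        have h2 : stepD δ F q₀ (CS.u1'2 q, OCSym.X :: stk n) =
            some (twoPoint (CS.prim q₁, stk n) (CS.base q₂, stk n)) := by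
          simp [stepD, ruleD, hg, map_twoPoint, stk_succ]
        exact mpair_of δ F q₀ h1 h2
          (requiv_two δ F q₀ rfl (rel_prim_base δ F q₀ hacc2))
      · simpa [rep, hc1, hc2] using hrefl (CS.u1'2' q, γ)
  | p' =>
    by_cases hc : condP δ F q₀ γ
    · have hrep : rep δ F q₀ (CS.p', γ) = (CS.p, γ) := by simp [rep, hc]
      rw [hrep]
      obtain ⟨hall, m, rfl⟩ := hc
      cases m with
      | zero =>
        exact mpair_none δ F q₀ (by simp [stk_zero, stepD, ruleD])
          (by simp [stk_zero, stepD, ruleD])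
      | succ m =>
        rw [stk_succ]
        have h1 : stepD δ F q₀ (CS.p', OCSym.X :: stk m) =
            some (threePoint (CS.p', stk (m+2)) (CS.prim q₀, stk m)
              (CS.r, stk (m+1))) := by
          simp [stepD, ruleD, map_threePoint, stk_succ]
        have h2 : stepD δ F q₀ (CS.p, OCSym.X :: stk m) =
            some (threePoint (CS.p, stk (m+2)) (CS.base q₀, stk m)
              (CS.r, stk (m+1))) := by
          simp [stepD, ruleD, map_threePoint, stk_succ]
        exact mpair_of δ F q₀ h1 h2
          (requiv_three δ F q₀ (rel_p'_p δ F q₀ hall)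
            (rel_prim_base δ F q₀ (hall m)) rfl)
    · simpa [rep, hc] using hrefl (CS.p', γ)

/-- `Rel` is a bisimulation. -/
theorem Rel_bisim :
    (PPDARules.plts (AfaRule δ F q₀ : PPDARules (CS Q) OCSym Unit)).IsBisimulation
      (Rel δ F q₀) := by
  refine ⟨Rel_equivalence δ F q₀, ?_⟩
  intro s t hst a d hTr
  rw [tr_iff] at hTr
  obtain ⟨d₁, hd₁, hre₁⟩ := (match_rep δ F q₀ s).1 d hTr
  rw [show rep δ F q₀ s = rep δ F q₀ t from hst] at hd₁
  obtain ⟨d', hd', hre₂⟩ := (match_rep δ F q₀ t).2 d₁ hd₁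
  exact ⟨d', (tr_iff δ F q₀ t a d').2 hd', fun s' => (hre₁ s').trans (hre₂ s')⟩

/-! ### Forward direction: generic facts about arbitrary bisimulations -/

theorem stepD_base_or {q q₁ q₂ : Q} (hg : δ q = Gate.or q₁ q₂) (β : List OCSym) :
    stepD δ F q₀ (CS.base q, OCSym.X :: β) =
      some (twoPoint (CS.r1 q, OCSym.X :: β) (CS.r2 q, OCSym.X :: β)) := by
  simp [stepD, ruleD, hg, map_twoPoint]

theorem stepD_base_and {q q₁ q₂ : Q} (hg : δ q = Gate.and q₁ q₂) (β : List OCSym) :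
    stepD δ F q₀ (CS.base q, OCSym.X :: β) =
      some (twoPoint (CS.u12 q, OCSym.X :: β) (CS.u1'2' q, OCSym.X :: β)) := by
  simp [stepD, ruleD, hg, map_twoPoint]

theorem stepD_prim_or {q q₁ q₂ : Q} (hg : δ q = Gate.or q₁ q₂) (β : List OCSym) :
    stepD δ F q₀ (CS.prim q, OCSym.X :: β) =
      some (twoPoint (CS.r1' q, OCSym.X :: β) (CS.r2' q, OCSym.X :: β)) := by
  simp [stepD, ruleD, hg, map_twoPoint]

theorem stepD_prim_and {q q₁ q₂ : Q} (hg : δ q = Gate.and q₁ q₂) (β : List OCSym) :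
    stepD δ F q₀ (CS.prim q, OCSym.X :: β) =
      some (twoPoint (CS.u12' q, OCSym.X :: β) (CS.u1'2 q, OCSym.X :: β)) := by
  simp [stepD, ruleD, hg, map_twoPoint]

theorem stepD_r1 {q q₁ q₂ : Q} (hg : δ q = Gate.or q₁ q₂) (β : List OCSym) :
    stepD δ F q₀ (CS.r1 q, OCSym.X :: β) =
      some (twoPoint (CS.base q₁, β) (CS.s1 q, OCSym.X :: β)) := by
  simp [stepD, ruleD, hg, map_twoPoint]

theorem stepD_r2 {q q₁ q₂ : Q} (hg : δ q = Gate.or q₁ q₂) (β : List OCSym) :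
    stepD δ F q₀ (CS.r2 q, OCSym.X :: β) =
      some (twoPoint (CS.base q₂, β) (CS.s2 q, OCSym.X :: β)) := by
  simp [stepD, ruleD, hg, map_twoPoint]

theorem stepD_r1' {q q₁ q₂ : Q} (hg : δ q = Gate.or q₁ q₂) (β : List OCSym) :
    stepD δ F q₀ (CS.r1' q, OCSym.X :: β) =
      some (twoPoint (CS.prim q₁, β) (CS.s1 q, OCSym.X :: β)) := by
  simp [stepD, ruleD, hg, map_twoPoint]

theorem stepD_r2' {q q₁ q₂ : Q} (hg : δ q = Gate.or q₁ q₂) (β : List OCSym) :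
    stepD δ F q₀ (CS.r2' q, OCSym.X :: β) =
      some (twoPoint (CS.prim q₂, β) (CS.s2 q, OCSym.X :: β)) := by
  simp [stepD, ruleD, hg, map_twoPoint]

theorem stepD_u12 {q q₁ q₂ : Q} (hg : δ q = Gate.and q₁ q₂) (β : List OCSym) :
    stepD δ F q₀ (CS.u12 q, OCSym.X :: β) =
      some (twoPoint (CS.base q₁, β) (CS.base q₂, β)) := by
  simp [stepD, ruleD, hg, map_twoPoint]

theorem stepD_u12' {q q₁ q₂ : Q} (hg : δ q = Gate.and q₁ q₂) (β : List OCSym) :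
    stepD δ F q₀ (CS.u12' q, OCSym.X :: β) =
      some (twoPoint (CS.base q₁, β) (CS.prim q₂, β)) := by
  simp [stepD, ruleD, hg, map_twoPoint]

theorem stepD_u1'2 {q q₁ q₂ : Q} (hg : δ q = Gate.and q₁ q₂) (β : List OCSym) :
    stepD δ F q₀ (CS.u1'2 q, OCSym.X :: β) =
      some (twoPoint (CS.prim q₁, β) (CS.base q₂, β)) := by
  simp [stepD, ruleD, hg, map_twoPoint]

theorem stepD_u1'2' {q q₁ q₂ : Q} (hg : δ q = Gate.and q₁ q₂) (β : List OCSym) :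
    stepD δ F q₀ (CS.u1'2' q, OCSym.X :: β) =
      some (twoPoint (CS.prim q₁, β) (CS.prim q₂, β)) := by
  simp [stepD, ruleD, hg, map_twoPoint]

theorem stepD_baseZ {q : Q} (hF : q ∈ F) (β : List OCSym) :
    stepD δ F q₀ (CS.base q, OCSym.Z :: β) =
      some (PMF.pure (CS.r, OCSym.Z :: β)) := by
  simp [stepD, ruleD, hF, PMF.pure_map]

section Forward

variable {r : CS Q × List OCSym → CS Q × List OCSym → Prop}

open Classical in
theorem mass_pure {α : Type} (x : α) (E : Set α) :
    PLTS.mass (PMF.pure x) E = if x ∈ E then 1 else 0 := by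
  rw [mass_eq_outer, PMF.toOuterMeasure_pure_apply]

theorem h12_0 : (1/2 : ℝ≥0∞) ≠ 0 := by norm_num
theorem h12_1 : (1/2 : ℝ≥0∞) ≠ 1 := by norm_num
theorem one_ne_half : ¬ (1 : ℝ≥0∞) = 1/2 := fun h => h12_1 h.symm

theorem h12_35 : (1/2 : ℝ≥0∞) ≠ 3/5 := by
  intro h; have := congrArg ENNReal.toReal h
  simp [ENNReal.toReal_div] at this
  all_goals norm_num at this
theorem h35_0 : (3/5 : ℝ≥0∞) ≠ 0 := by
  intro h; have := congrArg ENNReal.toReal h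
  simp [ENNReal.toReal_div] at this
  all_goals norm_num at this
theorem h35_1 : (3/5 : ℝ≥0∞) ≠ 1 := by
  intro h; have := congrArg ENNReal.toReal h
  simp [ENNReal.toReal_div] at this
  all_goals norm_num at this
theorem h13_0 : (1/3 : ℝ≥0∞) ≠ 0 := by norm_num
theorem h13_1 : (1/3 : ℝ≥0∞) ≠ 1 := by
  intro h; have := congrArg ENNReal.toReal h
  simp [ENNReal.toReal_div] at this
  all_goals norm_num at this
theorem h23_0 : (2/3 : ℝ≥0∞) ≠ 0 := by
  intro h; have := congrArg ENNReal.toReal h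
  simp [ENNReal.toReal_div] at this
  all_goals norm_num at this
theorem h23_1 : (2/3 : ℝ≥0∞) ≠ 1 := by
  intro h; have := congrArg ENNReal.toReal h
  simp [ENNReal.toReal_div] at this
  all_goals norm_num at this

theorem stepD_r_none (β : List OCSym) : stepD δ F q₀ (CS.r, β) = none := by
  cases β with
  | nil => rfl
  | cons Y β => cases Y <;> simp [stepD, ruleD]

variable (hr : (PPDARules.plts (AfaRule δ F q₀ : PPDARules (CS Q) OCSym Unit)).IsBisimulation r)

include hr

theorem rel_alive {c c' d} (h : r c c') (hc : stepD δ F q₀ c = some d) :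
    ∃ d', stepD δ F q₀ c' = some d' := by
  obtain ⟨d', hTr', _⟩ := hr.2 c c' h () d ((tr_iff δ F q₀ c () d).2 hc)
  exact ⟨d', (tr_iff δ F q₀ c' () d').1 hTr'⟩

theorem rel_step {c c' d d'} (h : r c c') (hc : stepD δ F q₀ c = some d)
    (hc' : stepD δ F q₀ c' = some d') : PLTS.REquiv r d d' := by
  obtain ⟨d'', hTr'', hre⟩ := hr.2 c c' h () d ((tr_iff δ F q₀ c () d).2 hc)
  rw [tr_iff δ F q₀ c' () d'', hc'] at hTr''
  cases hTr''
  exact hre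

theorem not_rel_dead_alive {z t d} (hz : stepD δ F q₀ z = none)
    (ht : stepD δ F q₀ t = some d) : ¬ r z t := by
  intro h
  obtain ⟨d', hd'⟩ := rel_alive δ F q₀ hr (hr.1.symm h) ht
  rw [hz] at hd'
  cases hd'

theorem not_rel_alive_dead {z t d} (ht : stepD δ F q₀ t = some d)
    (hz : stepD δ F q₀ z = none) : ¬ r t z := by
  intro h
  obtain ⟨d', hd'⟩ := rel_alive δ F q₀ hr h ht
  rw [hz] at hd'
  cases hd'

/-- The class of a dead configuration gets mass `0` or `1` from the step
distribution of any `base` configuration. -/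
theorem mass_cls_base {z : CS Q × List OCSym} (hz : stepD δ F q₀ z = none)
    (q : Q) (γ : List OCSym) {d'} (hd' : stepD δ F q₀ (CS.base q, γ) = some d') :
    PLTS.mass d' {t | r z t} = 0 ∨ PLTS.mass d' {t | r z t} = 1 := by
  classical
  cases γ with
  | nil => simp [stepD] at hd'
  | cons Y β =>
    cases Y with
    | Z =>
      by_cases hF : q ∈ F
      · rw [stepD_baseZ δ F q₀ hF β] at hd'
        cases hd'
        rw [mass_pure]
        split_ifs <;> simp
      · simp [stepD, ruleD, hF] at hd'
    | X =>
      rcases hg : δ q with ⟨q₁, q₂⟩ | ⟨q₁, q₂⟩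
      · rw [stepD_base_and δ F q₀ hg β] at hd'
        cases hd'
        left
        rw [mass_twoPoint]
        simp only [Set.mem_setOf_eq]
        rw [if_neg (not_rel_dead_alive δ F q₀ hr hz (stepD_u12 δ F q₀ hg β))]
        rw [if_neg (not_rel_dead_alive δ F q₀ hr hz (stepD_u1'2' δ F q₀ hg β))]
        simp
      · rw [stepD_base_or δ F q₀ hg β] at hd'
        cases hd'
        left
        rw [mass_twoPoint]
        simp only [Set.mem_setOf_eq]
        rw [if_neg (not_rel_dead_alive δ F q₀ hr hz (stepD_r1 δ F q₀ hg β))]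
        rw [if_neg (not_rel_dead_alive δ F q₀ hr hz (stepD_r2 δ F q₀ hg β))]
        simp

theorem mass_cls_prim {z : CS Q × List OCSym} (hz : stepD δ F q₀ z = none)
    (q : Q) (γ : List OCSym) {d'} (hd' : stepD δ F q₀ (CS.prim q, γ) = some d') :
    PLTS.mass d' {t | r z t} = 0 := by
  classical
  cases γ with
  | nil => simp [stepD] at hd'
  | cons Y β =>
    cases Y with
    | Z => simp [stepD, ruleD] at hd'
    | X =>
      rcases hg : δ q with ⟨q₁, q₂⟩ | ⟨q₁, q₂⟩
      · rw [stepD_prim_and δ F q₀ hg β] at hd'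
        cases hd'
        rw [mass_twoPoint]
        simp only [Set.mem_setOf_eq]
        rw [if_neg (not_rel_dead_alive δ F q₀ hr hz (stepD_u12' δ F q₀ hg β))]
        rw [if_neg (not_rel_dead_alive δ F q₀ hr hz (stepD_u1'2 δ F q₀ hg β))]
        simp
      · rw [stepD_prim_or δ F q₀ hg β] at hd'
        cases hd'
        rw [mass_twoPoint]
        simp only [Set.mem_setOf_eq]
        rw [if_neg (not_rel_dead_alive δ F q₀ hr hz (stepD_r1' δ F q₀ hg β))]
        rw [if_neg (not_rel_dead_alive δ F q₀ hr hz (stepD_r2' δ F q₀ hg β))]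
        simp

omit hr in
/-- step distribution of `s1 v Xβ`. -/
theorem stepD_s1 (v : Q) (β : List OCSym) :
    stepD δ F q₀ (CS.s1 v, OCSym.X :: β) =
      some (twoPoint (CS.s1 v, OCSym.X :: β) (CS.r, β)) := by
  simp [stepD, ruleD, map_twoPoint]

omit hr in
theorem stepD_s2 (v : Q) (β : List OCSym) :
    stepD δ F q₀ (CS.s2 v, OCSym.X :: β) =
      some (wPoint (CS.s2 v, OCSym.X :: β) (CS.r, β)) := by
  simp [stepD, ruleD, map_wPoint]

omit hr in
theorem stepD_p (β : List OCSym) :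
    stepD δ F q₀ (CS.p, OCSym.X :: β) =
      some (threePoint (CS.p, OCSym.X :: OCSym.X :: β) (CS.base q₀, β)
        (CS.r, OCSym.X :: β)) := by
  simp [stepD, ruleD, map_threePoint]

omit hr in
theorem stepD_p' (β : List OCSym) :
    stepD δ F q₀ (CS.p', OCSym.X :: β) =
      some (threePoint (CS.p', OCSym.X :: OCSym.X :: β) (CS.prim q₀, β)
        (CS.r, OCSym.X :: β)) := by
  simp [stepD, ruleD, map_threePoint]

/-- mass of the class of the dead target, from `s1`'s side: `1/2`. -/
theorem mass_s1_side (v : Q) (β : List OCSym) :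
    PLTS.mass (twoPoint (CS.s1 v, OCSym.X :: β) (CS.r, β))
      {t | r (CS.r, β) t} = 1/2 := by
  classical
  rw [mass_twoPoint]
  simp only [Set.mem_setOf_eq]
  rw [if_neg (not_rel_dead_alive δ F q₀ hr (stepD_r_none δ F q₀ β)
    (stepD_s1 δ F q₀ v β))]
  rw [if_pos (hr.1.refl _)]
  simp

theorem mass_s2_side (v : Q) (β : List OCSym) :
    PLTS.mass (wPoint (CS.s2 v, OCSym.X :: β) (CS.r, β))
      {t | r (CS.r, β) t} = 3/5 := by
  classical
  rw [mass_wPoint]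
  simp only [Set.mem_setOf_eq]
  rw [if_neg (not_rel_dead_alive δ F q₀ hr (stepD_r_none δ F q₀ β)
    (stepD_s2 δ F q₀ v β))]
  rw [if_pos (hr.1.refl _)]
  simp

/-- `s1 Xβ` is never related to a `base` configuration. -/
theorem not_rel_s1_base (v q : Q) (β γ : List OCSym) :
    ¬ r (CS.s1 v, OCSym.X :: β) (CS.base q, γ) := by
  intro h
  obtain ⟨d', hd'⟩ := rel_alive δ F q₀ hr h (stepD_s1 δ F q₀ v β)
  have hre := rel_step δ F q₀ hr h (stepD_s1 δ F q₀ v β) hd'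
  have := hre (CS.r, β)
  rw [mass_s1_side δ F q₀ hr v β] at this
  rcases mass_cls_base δ F q₀ hr (stepD_r_none δ F q₀ β) q γ hd' with h0 | h1
  · rw [h0] at this; exact h12_0 this
  · rw [h1] at this; exact h12_1 this

theorem not_rel_s1_prim (v q : Q) (β γ : List OCSym) :
    ¬ r (CS.s1 v, OCSym.X :: β) (CS.prim q, γ) := by
  intro h
  obtain ⟨d', hd'⟩ := rel_alive δ F q₀ hr h (stepD_s1 δ F q₀ v β)
  have hre := rel_step δ F q₀ hr h (stepD_s1 δ F q₀ v β) hd'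
  have := hre (CS.r, β)
  rw [mass_s1_side δ F q₀ hr v β,
    mass_cls_prim δ F q₀ hr (stepD_r_none δ F q₀ β) q γ hd'] at this
  exact h12_0 this

theorem not_rel_s2_base (v q : Q) (β γ : List OCSym) :
    ¬ r (CS.s2 v, OCSym.X :: β) (CS.base q, γ) := by
  intro h
  obtain ⟨d', hd'⟩ := rel_alive δ F q₀ hr h (stepD_s2 δ F q₀ v β)
  have hre := rel_step δ F q₀ hr h (stepD_s2 δ F q₀ v β) hd'
  have := hre (CS.r, β)
  rw [mass_s2_side δ F q₀ hr v β] at this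
  rcases mass_cls_base δ F q₀ hr (stepD_r_none δ F q₀ β) q γ hd' with h0 | h1
  · rw [h0] at this; exact h35_0 this
  · rw [h1] at this; exact h35_1 this

theorem not_rel_s2_prim (v q : Q) (β γ : List OCSym) :
    ¬ r (CS.s2 v, OCSym.X :: β) (CS.prim q, γ) := by
  intro h
  obtain ⟨d', hd'⟩ := rel_alive δ F q₀ hr h (stepD_s2 δ F q₀ v β)
  have hre := rel_step δ F q₀ hr h (stepD_s2 δ F q₀ v β) hd'
  have := hre (CS.r, β)
  rw [mass_s2_side δ F q₀ hr v β,
    mass_cls_prim δ F q₀ hr (stepD_r_none δ F q₀ β) q γ hd'] at this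
  exact h35_0 this

theorem not_rel_s1_s2 (v w : Q) (β β' : List OCSym) :
    ¬ r (CS.s1 v, OCSym.X :: β) (CS.s2 w, OCSym.X :: β') := by
  classical
  intro h
  have hre := rel_step δ F q₀ hr h (stepD_s1 δ F q₀ v β) (stepD_s2 δ F q₀ w β')
  have := hre (CS.r, β)
  rw [mass_s1_side δ F q₀ hr v β, mass_wPoint] at this
  simp only [Set.mem_setOf_eq] at this
  rw [if_neg (not_rel_dead_alive δ F q₀ hr (stepD_r_none δ F q₀ β)
    (stepD_s2 δ F q₀ w β'))] at this
  rw [zero_add] at this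
  split_ifs at this
  · exact h12_35 this
  · exact h12_0 this

theorem mass_p_side (β : List OCSym) :
    PLTS.mass (threePoint (CS.p, OCSym.X :: OCSym.X :: β) (CS.base q₀, β)
        (CS.r, OCSym.X :: β)) {t | r (CS.r, OCSym.X :: β) t} = 1/3 ∨
    PLTS.mass (threePoint (CS.p, OCSym.X :: OCSym.X :: β) (CS.base q₀, β)
        (CS.r, OCSym.X :: β)) {t | r (CS.r, OCSym.X :: β) t} = 2/3 := by
  classical
  rw [mass_threePoint]
  simp only [Set.mem_setOf_eq]
  rw [if_neg (not_rel_dead_alive δ F q₀ hr (stepD_r_none δ F q₀ (OCSym.X :: β))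
    (stepD_p δ F q₀ (OCSym.X :: β)))]
  rw [if_pos (hr.1.refl _)]
  split_ifs with hc
  · right
    rw [zero_add, ENNReal.div_add_div_same]
    norm_num
  · left
    simp

theorem mass_p'_side (β : List OCSym) :
    PLTS.mass (threePoint (CS.p', OCSym.X :: OCSym.X :: β) (CS.prim q₀, β)
        (CS.r, OCSym.X :: β)) {t | r (CS.r, OCSym.X :: β) t} = 1/3 ∨
    PLTS.mass (threePoint (CS.p', OCSym.X :: OCSym.X :: β) (CS.prim q₀, β)
        (CS.r, OCSym.X :: β)) {t | r (CS.r, OCSym.X :: β) t} = 2/3 := by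
  classical
  rw [mass_threePoint]
  simp only [Set.mem_setOf_eq]
  rw [if_neg (not_rel_dead_alive δ F q₀ hr (stepD_r_none δ F q₀ (OCSym.X :: β))
    (stepD_p' δ F q₀ (OCSym.X :: β)))]
  rw [if_pos (hr.1.refl _)]
  split_ifs with hc
  · right
    rw [zero_add, ENNReal.div_add_div_same]
    norm_num
  · left
    simp

theorem not_rel_p_base (q : Q) (β γ : List OCSym) :
    ¬ r (CS.p, OCSym.X :: β) (CS.base q, γ) := by
  intro h
  obtain ⟨d', hd'⟩ := rel_alive δ F q₀ hr h (stepD_p δ F q₀ β)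
  have hre := rel_step δ F q₀ hr h (stepD_p δ F q₀ β) hd'
  have key := hre (CS.r, OCSym.X :: β)
  rcases mass_cls_base δ F q₀ hr (stepD_r_none δ F q₀ (OCSym.X :: β)) q γ hd'
    with h0 | h1 <;>
  rcases mass_p_side δ F q₀ hr β with hL | hL <;>
    rw [hL] at key
  · rw [h0] at key; exact h13_0 key
  · rw [h0] at key; exact h23_0 key
  · rw [h1] at key; exact h13_1 key
  · rw [h1] at key; exact h23_1 key

theorem not_rel_p_prim (q : Q) (β γ : List OCSym) :
    ¬ r (CS.p, OCSym.X :: β) (CS.prim q, γ) := by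
  intro h
  obtain ⟨d', hd'⟩ := rel_alive δ F q₀ hr h (stepD_p δ F q₀ β)
  have hre := rel_step δ F q₀ hr h (stepD_p δ F q₀ β) hd'
  have key := hre (CS.r, OCSym.X :: β)
  rw [mass_cls_prim δ F q₀ hr (stepD_r_none δ F q₀ (OCSym.X :: β)) q γ hd'] at key
  rcases mass_p_side δ F q₀ hr β with hL | hL <;> rw [hL] at key
  · exact h13_0 key
  · exact h23_0 key

theorem not_rel_p'_base (q : Q) (β γ : List OCSym) :
    ¬ r (CS.p', OCSym.X :: β) (CS.base q, γ) := by
  intro h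
  obtain ⟨d', hd'⟩ := rel_alive δ F q₀ hr h (stepD_p' δ F q₀ β)
  have hre := rel_step δ F q₀ hr h (stepD_p' δ F q₀ β) hd'
  have key := hre (CS.r, OCSym.X :: β)
  rcases mass_cls_base δ F q₀ hr (stepD_r_none δ F q₀ (OCSym.X :: β)) q γ hd'
    with h0 | h1 <;>
  rcases mass_p'_side δ F q₀ hr β with hL | hL <;>
    rw [hL] at key
  · rw [h0] at key; exact h13_0 key
  · rw [h0] at key; exact h23_0 key
  · rw [h1] at key; exact h13_1 key
  · rw [h1] at key; exact h23_1 key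

theorem not_rel_p'_prim (q : Q) (β γ : List OCSym) :
    ¬ r (CS.p', OCSym.X :: β) (CS.prim q, γ) := by
  intro h
  obtain ⟨d', hd'⟩ := rel_alive δ F q₀ hr h (stepD_p' δ F q₀ β)
  have hre := rel_step δ F q₀ hr h (stepD_p' δ F q₀ β) hd'
  have key := hre (CS.r, OCSym.X :: β)
  rw [mass_cls_prim δ F q₀ hr (stepD_r_none δ F q₀ (OCSym.X :: β)) q γ hd'] at key
  rcases mass_p'_side δ F q₀ hr β with hL | hL <;> rw [hL] at key
  · exact h13_0 key
  · exact h23_0 key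

theorem not_rel_r1_r2' {q q₁ q₂ : Q} (hg : δ q = Gate.or q₁ q₂)
    (β β' : List OCSym) :
    ¬ r (CS.r1 q, OCSym.X :: β) (CS.r2' q, OCSym.X :: β') := by
  classical
  intro h
  have hre := rel_step δ F q₀ hr h (stepD_r1 δ F q₀ hg β) (stepD_r2' δ F q₀ hg β')
  have key := hre (CS.s1 q, OCSym.X :: β)
  rw [mass_twoPoint, mass_twoPoint] at key
  simp only [Set.mem_setOf_eq] at key
  rw [if_neg (not_rel_s1_base δ F q₀ hr q q₁ β β)] at key
  rw [if_pos (hr.1.refl _)] at key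
  rw [if_neg (not_rel_s1_prim δ F q₀ hr q q₂ β β')] at key
  rw [if_neg (not_rel_s1_s2 δ F q₀ hr q q β β')] at key
  norm_num at key

theorem not_rel_r2_r1' {q q₁ q₂ : Q} (hg : δ q = Gate.or q₁ q₂)
    (β β' : List OCSym) :
    ¬ r (CS.r2 q, OCSym.X :: β) (CS.r1' q, OCSym.X :: β') := by
  classical
  intro h
  have hre := rel_step δ F q₀ hr h (stepD_r2 δ F q₀ hg β) (stepD_r1' δ F q₀ hg β')
  have key := hre (CS.s2 q, OCSym.X :: β)
  rw [mass_twoPoint, mass_twoPoint] at key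
  simp only [Set.mem_setOf_eq] at key
  rw [if_neg (not_rel_s2_base δ F q₀ hr q q₂ β β)] at key
  rw [if_pos (hr.1.refl _)] at key
  rw [if_neg (not_rel_s2_prim δ F q₀ hr q q₁ β β')] at key
  rw [if_neg (fun hh => not_rel_s1_s2 δ F q₀ hr q q β' β
      (hr.1.symm hh))] at key
  norm_num at key

/-- **Forward direction of (1)**: if the word of length `n` is accepted from
`q`, then no bisimulation relates `qXⁿZ` and `q'XⁿZ`. -/
theorem fwd : ∀ n q, AfaAcc δ F n q →
    ¬ r (CS.base q, stk n) (CS.prim q, stk n) := by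
  intro n
  induction n with
  | zero =>
    intro q hacc h
    rw [stk_zero] at h
    exact not_rel_alive_dead δ F q₀ hr (stepD_baseZ δ F q₀ hacc [])
      (by simp [stepD, ruleD]) h
  | succ n ih =>
    intro q hacc h
    rw [stk_succ] at h
    rcases hg : δ q with ⟨q₁, q₂⟩ | ⟨q₁, q₂⟩
    · -- OR-gadget of the pOCA (δ q = AND): Acc means both accepted
      obtain ⟨hA1, hA2⟩ := (acc_succ_and δ F hg n).1 hacc
      have hre := rel_step δ F q₀ hr h (stepD_base_and δ F q₀ hg (stk n))
        (stepD_prim_and δ F q₀ hg (stk n))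
      have key := hre (CS.u12 q, OCSym.X :: stk n)
      rw [mass_twoPoint, mass_twoPoint] at key
      simp only [Set.mem_ofPred_eq] at key
      rw [if_pos (hr.1.refl _)] at key
      by_cases h1 : r (CS.u12 q, OCSym.X :: stk n) (CS.u12' q, OCSym.X :: stk n)
      · have hre2 := rel_step δ F q₀ hr h1 (stepD_u12 δ F q₀ hg (stk n))
          (stepD_u12' δ F q₀ hg (stk n))
        have k2 := hre2 (CS.base q₂, stk n)
        rw [mass_twoPoint, mass_twoPoint] at k2
        simp only [Set.mem_ofPred_eq] at k2
        rw [if_pos (hr.1.refl _)] at k2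
        by_cases hf : r (CS.base q₂, stk n) (CS.prim q₂, stk n)
        · exact ih q₂ hA2 hf
        · rw [if_neg hf] at k2
          split_ifs at k2 <;> norm_num [ENNReal.inv_two_add_inv_two, ← one_div, one_ne_half] at k2
      · by_cases h2 : r (CS.u12 q, OCSym.X :: stk n) (CS.u1'2 q, OCSym.X :: stk n)
        · have hre2 := rel_step δ F q₀ hr h2 (stepD_u12 δ F q₀ hg (stk n))
            (stepD_u1'2 δ F q₀ hg (stk n))
          have k2 := hre2 (CS.base q₁, stk n)
          rw [mass_twoPoint, mass_twoPoint] at k2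
          simp only [Set.mem_ofPred_eq] at k2
          rw [if_pos (hr.1.refl _)] at k2
          by_cases hf : r (CS.base q₁, stk n) (CS.prim q₁, stk n)
          · exact ih q₁ hA1 hf
          · rw [if_neg hf] at k2
            split_ifs at k2 <;> norm_num [ENNReal.inv_two_add_inv_two, ← one_div, one_ne_half] at k2
        · rw [if_neg h1, if_neg h2] at key
          split_ifs at key <;> norm_num [ENNReal.inv_two_add_inv_two, ← one_div, one_ne_half] at key
    · -- AND-gadget of the pOCA (δ q = OR): Acc means one accepted
      have hre := rel_step δ F q₀ hr h (stepD_base_or δ F q₀ hg (stk n))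
        (stepD_prim_or δ F q₀ hg (stk n))
      have key1 := hre (CS.r1 q, OCSym.X :: stk n)
      rw [mass_twoPoint, mass_twoPoint] at key1
      simp only [Set.mem_ofPred_eq] at key1
      rw [if_pos (hr.1.refl _)] at key1
      rw [if_neg (not_rel_r1_r2' δ F q₀ hr hg (stk n) (stk n))] at key1
      have hA : r (CS.r1 q, OCSym.X :: stk n) (CS.r1' q, OCSym.X :: stk n) := by
        by_contra hA
        rw [if_neg hA] at key1
        split_ifs at key1 <;> norm_num [ENNReal.inv_two_add_inv_two, ← one_div, one_ne_half] at key1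
      have key2 := hre (CS.r2 q, OCSym.X :: stk n)
      rw [mass_twoPoint, mass_twoPoint] at key2
      simp only [Set.mem_ofPred_eq] at key2
      rw [if_pos (hr.1.refl _)] at key2
      rw [if_neg (not_rel_r2_r1' δ F q₀ hr hg (stk n) (stk n))] at key2
      have hB : r (CS.r2 q, OCSym.X :: stk n) (CS.r2' q, OCSym.X :: stk n) := by
        by_contra hB
        rw [if_neg hB] at key2
        split_ifs at key2 <;> norm_num [ENNReal.inv_two_add_inv_two, ← one_div, one_ne_half] at key2
      rcases (acc_succ_or δ F hg n).1 hacc with hA1 | hA2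
      · have hre2 := rel_step δ F q₀ hr hA (stepD_r1 δ F q₀ hg (stk n))
          (stepD_r1' δ F q₀ hg (stk n))
        have k2 := hre2 (CS.base q₁, stk n)
        rw [mass_twoPoint, mass_twoPoint] at k2
        simp only [Set.mem_ofPred_eq] at k2
        rw [if_pos (hr.1.refl _)] at k2
        rw [if_neg (fun hh => not_rel_s1_base δ F q₀ hr q q₁ (stk n) (stk n)
          (hr.1.symm hh))] at k2
        by_cases hf : r (CS.base q₁, stk n) (CS.prim q₁, stk n)
        · exact ih q₁ hA1 hf
        · rw [if_neg hf] at k2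
          norm_num [ENNReal.inv_two_add_inv_two, ← one_div, one_ne_half] at k2
      · have hre2 := rel_step δ F q₀ hr hB (stepD_r2 δ F q₀ hg (stk n))
          (stepD_r2' δ F q₀ hg (stk n))
        have k2 := hre2 (CS.base q₂, stk n)
        rw [mass_twoPoint, mass_twoPoint] at k2
        simp only [Set.mem_ofPred_eq] at k2
        rw [if_pos (hr.1.refl _)] at k2
        rw [if_neg (fun hh => not_rel_s2_base δ F q₀ hr q q₂ (stk n) (stk n)
          (hr.1.symm hh))] at k2
        by_cases hf : r (CS.base q₂, stk n) (CS.prim q₂, stk n)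
        · exact ih q₂ hA2 hf
        · rw [if_neg hf] at k2
          norm_num [ENNReal.inv_two_add_inv_two, ← one_div, one_ne_half] at k2

theorem fwd_chain (h : r (CS.p, stk 1) (CS.p', stk 1)) :
    ∀ m, r (CS.p, stk (m+1)) (CS.p', stk (m+1)) := by
  intro m
  induction m with
  | zero => exact h
  | succ m ih =>
    have hre := rel_step δ F q₀ hr ih (stepD_p δ F q₀ (stk m))
      (stepD_p' δ F q₀ (stk m))
    have key := hre (CS.p, OCSym.X :: OCSym.X :: stk m)
    rw [mass_threePoint, mass_threePoint] at key
    simp only [Set.mem_ofPred_eq] at key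
    rw [if_pos (hr.1.refl _)] at key
    rw [if_neg (not_rel_p_base δ F q₀ hr q₀ (OCSym.X :: stk m) (stk m))] at key
    rw [if_neg (not_rel_alive_dead δ F q₀ hr
      (stepD_p δ F q₀ (OCSym.X :: stk m))
      (stepD_r_none δ F q₀ (OCSym.X :: stk m)))] at key
    rw [if_neg (not_rel_p_prim δ F q₀ hr q₀ (OCSym.X :: stk m) (stk m))] at key
    show r (CS.p, OCSym.X :: OCSym.X :: stk m) (CS.p', OCSym.X :: OCSym.X :: stk m)
    by_contra hc
    rw [if_neg hc] at key
    norm_num at key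

/-- **Forward direction of (2)**. -/
theorem fwd_p (h : r (CS.p, stk 1) (CS.p', stk 1)) (n : ℕ)
    (hacc : AfaAcc δ F n q₀) : False := by
  have hc := fwd_chain δ F q₀ hr h n
  have hre := rel_step δ F q₀ hr hc (stepD_p δ F q₀ (stk n))
    (stepD_p' δ F q₀ (stk n))
  have halive : ∃ e, stepD δ F q₀ (CS.base q₀, stk n) = some e := by
    cases n with
    | zero => exact ⟨_, stepD_baseZ δ F q₀ hacc []⟩
    | succ n =>
      rcases hg : δ q₀ with ⟨a, b⟩ | ⟨a, b⟩
      · exact ⟨_, stepD_base_and δ F q₀ hg (stk n)⟩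
      · exact ⟨_, stepD_base_or δ F q₀ hg (stk n)⟩
  obtain ⟨e, he⟩ := halive
  have key := hre (CS.base q₀, stk n)
  rw [mass_threePoint, mass_threePoint] at key
  simp only [Set.mem_ofPred_eq] at key
  rw [if_pos (hr.1.refl _)] at key
  rw [if_neg (fun hh => not_rel_p_base δ F q₀ hr q₀ (OCSym.X :: stk n) (stk n)
    (hr.1.symm hh))] at key
  rw [if_neg (not_rel_alive_dead δ F q₀ hr he
    (stepD_r_none δ F q₀ (OCSym.X :: stk n)))] at key
  rw [if_neg (fun hh => not_rel_p'_base δ F q₀ hr q₀ (OCSym.X :: stk n) (stk n)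
    (hr.1.symm hh))] at key
  have hprim : r (CS.base q₀, stk n) (CS.prim q₀, stk n) := by
    by_contra hp
    rw [if_neg hp] at key
    norm_num at key
  exact fwd δ F q₀ hr n q₀ hacc hprim

end Forward

end Rules

end AfaProof

/-- For the pOCA `Δ` constructed from a 1L-AFA
`(Q, δ, q₀, F)`: (1) `qXⁿZ ∼ q'XⁿZ` in `S(Δ)` iff `¬ AfaAcc(q, n)`, and
(2) `pXZ ∼ p'XZ` in `S(Δ)` iff `{n | AfaAcc(q₀, n)} = ∅`. -/
theorem afa_emptiness_reduction (Q : Type) [Fintype Q]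
    (δ : Q → Gate Q) (q₀ : Q) (F : Set Q) :
    (∀ (q : Q) (n : ℕ),
        (PPDARules.plts (AfaRule δ F q₀ : PPDARules (CS Q) OCSym Unit)).Bisim
            (oconf (CS.base q) n) (oconf (CS.prim q) n)
          ↔ ¬ AfaAcc δ F n q) ∧
    ((PPDARules.plts (AfaRule δ F q₀ : PPDARules (CS Q) OCSym Unit)).Bisim
        (oconf CS.p 1) (oconf CS.p' 1)
      ↔ ∀ n : ℕ, ¬ AfaAcc δ F n q₀) := by
  constructor
  · intro q n
    constructor
    · rintro ⟨r, hr, hrel⟩ hacc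
      exact AfaProof.fwd δ F q₀ hr n q hacc hrel
    · intro hacc
      exact ⟨AfaProof.Rel δ F q₀, AfaProof.Rel_bisim δ F q₀,
        (AfaProof.rel_prim_base δ F q₀ hacc).symm⟩
  · constructor
    · rintro ⟨r, hr, hrel⟩ n hacc
      exact AfaProof.fwd_p δ F q₀ hr hrel n hacc
    · intro hall
      exact ⟨AfaProof.Rel δ F q₀, AfaProof.Rel_bisim δ F q₀,
        (AfaProof.rel_p'_p δ F q₀ hall).symm⟩
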